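/- Small loss of the consensus-sign model in the lower-bound construction: Let τ = 1/1000, let w, p ≥ 1 be integers, and let x_1, …, x_w ∈ {−1, 1}^p. Let W ⊆ {1, …, p} with |W| ≥ (1 − τ)·p and s : {1, …, p} → {−1, 1} be such that x_i(j) = s(j) for every i ∈ {1, …, w} and every j ∈ W (W is a set of consensus coordinates with signs s). Let θ* ∈ ℝ^p be any vector with θ*(j) ∈ {−1/p, 1/p} for all j and θ*(j) = s(j)/p for all j ∈ W. Then for any real k with 0 ≤ k ≤ τ·w·p, Σ_{i=1}^w (⟨x_i, θ*⟩ − 1)² + k·‖θ*‖₂² ≤ (τ + 4τ²)·w. -/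

import Mathlib

open scoped BigOperators

/-- Small loss of the consensus-sign model in the lower-bound construction. -/
theorem consensus_model_small_loss {w p : ℕ} (hw : 1 ≤ w) (hp : 1 ≤ p)
    (τ : ℝ) (hτ : τ = 1 / 1000)
    (x : Fin w → Fin p → ℝ) (hx : ∀ i j, x i j = 1 ∨ x i j = -1)
    (W : Finset (Fin p)) (hW : (1 - τ) * p ≤ W.card)
    (s : Fin p → ℝ) (hs : ∀ j, s j = 1 ∨ s j = -1)
    (hcons : ∀ i, ∀ j ∈ W, x i j = s j)
    (θs : Fin p → ℝ)
    (hθ : ∀ j, θs j = 1 / p ∨ θs j = -(1 / p))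
    (hθW : ∀ j ∈ W, θs j = s j / p)
    (k : ℝ) (hk0 : 0 ≤ k) (hk1 : k ≤ τ * w * p) :
    ∑ i, (∑ j, x i j * θs j - 1) ^ 2 + k * ∑ j, (θs j) ^ 2 ≤
      (τ + 4 * τ ^ 2) * w := by
  have hp' : (0:ℝ) < p := by exact_mod_cast hp
  have hτ0 : (0:ℝ) < τ := by rw [hτ]; norm_num
  -- card facts
  have hcle : (W.card : ℝ) ≤ p := by
    exact_mod_cast (Finset.card_le_univ W).trans (Fintype.card_fin p).le
  have hcompl : (Wᶜ.card : ℝ) = p - W.card := by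
    rw [Finset.card_compl, Nat.cast_sub (by exact_mod_cast (Finset.card_le_univ W).trans_eq (by simp))]
    simp
  have hgap : ((p:ℝ) - W.card) / p ≤ τ := by
    rw [div_le_iff₀ hp']
    nlinarith
  -- squared theta sum
  have hsum2 : ∑ j, (θs j) ^ 2 = 1 / p := by
    have : ∀ j : Fin p, (θs j) ^ 2 = 1 / p ^ 2 := by
      intro j; rcases hθ j with h | h <;> rw [h] <;> ring
    rw [Finset.sum_congr rfl (fun j _ => this j), Finset.sum_const, Finset.card_univ,
      Fintype.card_fin, nsmul_eq_mul]
    field_simp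
  -- per-row bound
  have key : ∀ i, |∑ j, x i j * θs j - 1| ≤ 2 * τ := by
    intro i
    have hsplit := Finset.sum_add_sum_compl W (fun j => x i j * θs j)
    have hWsum : ∑ j ∈ W, x i j * θs j = W.card / p := by
      have : ∀ j ∈ W, x i j * θs j = 1 / p := by
        intro j hj
        rw [hcons i j hj, hθW j hj]
        rcases hs j with h | h <;> rw [h] <;> ring
      rw [Finset.sum_congr rfl this, Finset.sum_const, nsmul_eq_mul]
      ring
    have hCsum : |∑ j ∈ Wᶜ, x i j * θs j| ≤ ((p:ℝ) - W.card) / p := by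
      have habs : ∀ j ∈ Wᶜ, |x i j * θs j| = 1 / p := by
        intro j _
        rw [abs_mul]
        rcases hx i j with h | h <;> rcases hθ j with h' | h' <;> rw [h, h'] <;>
          simp [abs_of_nonneg (le_of_lt (by positivity : (0:ℝ) < 1 / p))]
      calc |∑ j ∈ Wᶜ, x i j * θs j| ≤ ∑ j ∈ Wᶜ, |x i j * θs j| :=
            Finset.abs_sum_le_sum_abs _ _
        _ = ∑ _j ∈ Wᶜ, 1 / (p:ℝ) := Finset.sum_congr rfl habs
        _ = Wᶜ.card / p := by rw [Finset.sum_const, nsmul_eq_mul]; ring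
        _ = ((p:ℝ) - W.card) / p := by rw [hcompl]
    have hE := abs_le.mp hCsum
    have h1 : (W.card : ℝ) / p - 1 = -(((p:ℝ) - W.card) / p) := by
      field_simp; ring
    rw [abs_le]
    constructor <;> [nlinarith [hsplit, hWsum, hE.1, hE.2, hgap];
      nlinarith [hsplit, hWsum, hE.1, hE.2, hgap]]
  have hsq : ∀ i, (∑ j, x i j * θs j - 1) ^ 2 ≤ 4 * τ ^ 2 := by
    intro i
    have h := abs_le.mp (key i)
    nlinarith [h.1, h.2]
  have hsum1 : ∑ i, (∑ j, x i j * θs j - 1) ^ 2 ≤ 4 * τ ^ 2 * w := by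
    calc ∑ i, (∑ j, x i j * θs j - 1) ^ 2 ≤ ∑ _i : Fin w, 4 * τ ^ 2 :=
          Finset.sum_le_sum (fun i _ => hsq i)
      _ = 4 * τ ^ 2 * w := by
          rw [Finset.sum_const, Finset.card_univ, Fintype.card_fin, nsmul_eq_mul]; ring
  have hk : k * (1 / p) ≤ τ * w := by
    rw [mul_one_div, div_le_iff₀ hp']
    linarith
  rw [hsum2]
  nlinarith [hsum1, hk]
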